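/- For all α, β > 0, the squared L² distance ‖Ψ(α,·,x_c) − Ψ(β,·,x_c)‖² equals 2 − 2·2^{5/2} α^{5/4} β^{5/4}/(α+β)^{5/2}. -/

import Mathlib

open MeasureTheory Real Filter Topology

lemma gauss4_integrableOn {b : ℝ} (hb : 0 < b) :
    IntegrableOn (fun r : ℝ => r ^ 4 * Real.exp (-b * r ^ 2)) (Set.Ioi 0) := by
  refine (integrableOn_rpow_mul_exp_neg_mul_sq hb (s := 4) (by norm_num)).congr_fun
    (fun x hx => ?_) measurableSet_Ioi
  beta_reduce
  rw [show (4:ℝ) = ((4:ℕ):ℝ) by norm_num, Real.rpow_natCast]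

lemma gauss4_integral {b : ℝ} (hb : 0 < b) :
    ∫ r in Set.Ioi (0:ℝ), r ^ 4 * Real.exp (-b * r ^ 2)
      = b ^ (-(5:ℝ)/2) * (1/2) * Real.Gamma (5/2) := by
  rw [show (-(5:ℝ)/2) = (-((4:ℝ)+1)/2) by norm_num,
    show ((5:ℝ)/2) = (((4:ℝ)+1)/2) by norm_num,
    ← integral_rpow_mul_exp_neg_mul_rpow (p := 2) (q := 4) two_pos (by norm_num) hb]
  refine setIntegral_congr_fun measurableSet_Ioi (fun x hx => ?_)
  rw [show (4:ℝ) = ((4:ℕ):ℝ) by norm_num, Real.rpow_natCast,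
    show (2:ℝ) = ((2:ℕ):ℝ) by norm_num, Real.rpow_natCast]

noncomputable def Psi (xc : EuclideanSpace ℝ (Fin 3)) (α : ℝ)
    (x : EuclideanSpace ℝ (Fin 3)) : EuclideanSpace ℝ (Fin 3) :=
  ((2 / 3 : ℝ) ^ ((1 : ℝ) / 2) * Real.pi ^ (-(3 : ℝ) / 4) * α ^ ((5 : ℝ) / 4) *
    Real.exp (-(α / 2) * ‖x - xc‖ ^ 2)) • (x - xc)

theorem psi_l2_distance_sq (xc : EuclideanSpace ℝ (Fin 3)) (α β : ℝ) (hα : 0 < α) (hβ : 0 < β) :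
    ∫ x : EuclideanSpace ℝ (Fin 3), ‖Psi xc α x - Psi xc β x‖ ^ 2 =
      2 - 2 * ((2 : ℝ) ^ ((5 : ℝ) / 2) * α ^ ((5 : ℝ) / 4) * β ^ ((5 : ℝ) / 4) /
        (α + β) ^ ((5 : ℝ) / 2)) := by
  set c : ℝ → ℝ := fun γ => (2 / 3 : ℝ) ^ ((1 : ℝ) / 2) * Real.pi ^ (-(3 : ℝ) / 4) *
    γ ^ ((5 : ℝ) / 4) with hc
  set f : ℝ → ℝ := fun r =>
    (c α * Real.exp (-(α/2) * r ^ 2) - c β * Real.exp (-(β/2) * r ^ 2)) ^ 2 * r ^ 2 with hf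
  have h1 : ∀ x : EuclideanSpace ℝ (Fin 3),
      ‖Psi xc α x - Psi xc β x‖ ^ 2 = f (‖x - xc‖) := by
    intro x
    simp only [Psi, hf, hc, ← sub_smul, norm_smul, Real.norm_eq_abs, mul_pow, sq_abs]
  have h2 : ∫ x : EuclideanSpace ℝ (Fin 3), ‖Psi xc α x - Psi xc β x‖ ^ 2
      = ∫ x : EuclideanSpace ℝ (Fin 3), f ‖x‖ := by
    simp_rw [h1]
    exact integral_sub_right_eq_self (fun x : EuclideanSpace ℝ (Fin 3) => f ‖x‖) xc
  have h3 := MeasureTheory.integral_fun_norm_addHaar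
      (volume : Measure (EuclideanSpace ℝ (Fin 3))) f
  rw [finrank_euclideanSpace_fin] at h3
  -- pointwise expansion of the radial integrand
  have hγ : 0 < (α + β) / 2 := by linarith
  have hexp : ∀ y : ℝ, y ^ (3-1) • f y
      = (c α)^2 * (y ^ 4 * Real.exp (-α * y ^ 2))
        + (c β)^2 * (y ^ 4 * Real.exp (-β * y ^ 2))
        - (2 * (c α * c β)) * (y ^ 4 * Real.exp (-((α+β)/2) * y ^ 2)) := by
    intro y
    have huu : Real.exp (-(α/2) * y ^ 2) ^ 2 = Real.exp (-α * y ^ 2) := by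
      rw [sq, ← Real.exp_add]; congr 1; ring
    have hvv : Real.exp (-(β/2) * y ^ 2) ^ 2 = Real.exp (-β * y ^ 2) := by
      rw [sq, ← Real.exp_add]; congr 1; ring
    have huv : Real.exp (-(α/2) * y ^ 2) * Real.exp (-(β/2) * y ^ 2)
        = Real.exp (-((α+β)/2) * y ^ 2) := by
      rw [← Real.exp_add]; congr 1; ring
    simp only [hf, smul_eq_mul]
    rw [← huu, ← hvv, ← huv]
    ring
  -- compute the radial integral
  have h4 : ∫ y in Set.Ioi (0:ℝ), y ^ (3-1) • f y
      = (c α)^2 * (α ^ (-(5:ℝ)/2) * (1/2) * Real.Gamma (5/2))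
        + (c β)^2 * (β ^ (-(5:ℝ)/2) * (1/2) * Real.Gamma (5/2))
        - (2 * (c α * c β)) * (((α+β)/2) ^ (-(5:ℝ)/2) * (1/2) * Real.Gamma (5/2)) := by
    simp_rw [hexp]
    rw [integral_sub, integral_add]
    · rw [integral_const_mul, integral_const_mul, integral_const_mul,
        gauss4_integral hα, gauss4_integral hβ, gauss4_integral hγ]
    · exact (gauss4_integrableOn hα).const_mul _
    · exact (gauss4_integrableOn hβ).const_mul _
    · exact (((gauss4_integrableOn hα).const_mul _).add
        ((gauss4_integrableOn hβ).const_mul _))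
    · exact (gauss4_integrableOn hγ).const_mul _
  rw [h2, h3, h4]
  -- volume of the unit ball
  have hG : (0:ℝ) < Real.Gamma (5/2) := Real.Gamma_pos_of_pos (by norm_num)
  have hV : (MeasureTheory.volume (Metric.ball (0:EuclideanSpace ℝ (Fin 3)) 1)).toReal
      = Real.sqrt π ^ 3 / Real.Gamma (5/2) := by
    rw [EuclideanSpace.volume_ball]
    rw [show (Fintype.card (Fin 3)) = 3 from by simp]
    rw [show ((3:ℕ):ℝ)/2 + 1 = (5:ℝ)/2 from by norm_num]
    rw [ENNReal.ofReal_one, one_pow, one_mul,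
      ENNReal.toReal_ofReal (by positivity)]
  rw [measureReal_def, hV]
  have hπ3 : Real.sqrt π ^ 3 = π ^ ((3:ℝ)/2) := by
    rw [Real.sqrt_eq_rpow, ← Real.rpow_natCast (π ^ ((1:ℝ)/2)) 3,
      ← Real.rpow_mul pi_pos.le]
    norm_num
  have e1 : (2/3:ℝ)^((1:ℝ)/2) * (2/3:ℝ)^((1:ℝ)/2) = 2/3 := by
    rw [← Real.rpow_add (by norm_num)]; norm_num
  have e2 : π^(-(3:ℝ)/4) * π^(-(3:ℝ)/4) = π ^ (-((3:ℝ)/2)) := by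
    rw [← Real.rpow_add pi_pos]; norm_num
  have hcsq : ∀ γ : ℝ, 0 < γ → (c γ)^2 = (2/3) * π ^ (-((3:ℝ)/2)) * γ ^ ((5:ℝ)/2) := by
    intro γ hγ'
    have e3 : γ^((5:ℝ)/4) * γ^((5:ℝ)/4) = γ ^ ((5:ℝ)/2) := by
      rw [← Real.rpow_add hγ']; norm_num
    calc (c γ)^2 = ((2/3:ℝ)^((1:ℝ)/2) * (2/3:ℝ)^((1:ℝ)/2))
          * ((π^(-(3:ℝ)/4) * π^(-(3:ℝ)/4)) * (γ^((5:ℝ)/4) * γ^((5:ℝ)/4))) := by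
          rw [hc]; ring
      _ = (2/3) * π ^ (-((3:ℝ)/2)) * γ ^ ((5:ℝ)/2) := by rw [e1, e2, e3]; ring
  have hcc : c α * c β = (2/3) * π ^ (-((3:ℝ)/2)) * (α^((5:ℝ)/4) * β^((5:ℝ)/4)) := by
    calc c α * c β = ((2/3:ℝ)^((1:ℝ)/2) * (2/3:ℝ)^((1:ℝ)/2))
          * ((π^(-(3:ℝ)/4) * π^(-(3:ℝ)/4)) * (α^((5:ℝ)/4) * β^((5:ℝ)/4))) := by
          rw [hc]; ring
      _ = _ := by rw [e1, e2]; ring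
  have hs : (0:ℝ) < α + β := by linarith
  have hhalf : ((α+β)/2:ℝ) ^ (-(5:ℝ)/2) = 2 ^ ((5:ℝ)/2) / (α+β) ^ ((5:ℝ)/2) := by
    rw [show (-(5:ℝ)/2) = -((5:ℝ)/2) from by norm_num,
      Real.div_rpow hs.le (by norm_num : (0:ℝ) ≤ 2), Real.rpow_neg hs.le,
      Real.rpow_neg (by norm_num : (0:ℝ) ≤ 2)]
    rw [div_eq_mul_inv, inv_inv, div_eq_mul_inv]
    ring
  rw [hcsq α hα, hcsq β hβ, hcc, hhalf, hπ3]
  rw [show (-(5:ℝ)/2) = -((5:ℝ)/2) from by norm_num,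
    Real.rpow_neg hα.le, Real.rpow_neg hβ.le, Real.rpow_neg pi_pos.le]
  have hP : π ^ ((3:ℝ)/2) ≠ 0 := by positivity
  have hA : α ^ ((5:ℝ)/2) ≠ 0 := by positivity
  have hB : β ^ ((5:ℝ)/2) ≠ 0 := by positivity
  have hS : (α+β) ^ ((5:ℝ)/2) ≠ 0 := by positivity
  have hGn : Real.Gamma (5/2) ≠ 0 := ne_of_gt hG
  rw [nsmul_eq_mul, smul_eq_mul]
  field_simp
  ring
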